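/- For fixed real x and natural n ≥ 1, the limit as real y → 0 along the sequence y/n² (equivalently, as n → ∞ with x ≠ 0 fixed) satisfies: lim_{n→∞} H_n(x, y/n²) / x^n = exp(y/x²), for x ≠ 0. -/

import Mathlib

open Real Finset Filter Topology

noncomputable def hermite2 (n : ℕ) (x y : ℝ) : ℝ :=
  (Nat.factorial n : ℝ) *
    ∑ r ∈ Finset.range (n / 2 + 1),
      x ^ (n - 2 * r) * y ^ r / ((Nat.factorial (n - 2 * r) : ℝ) * (Nat.factorial r : ℝ))

noncomputable def hF (c : ℝ) (n r : ℕ) : ℝ :=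
  if 2 * r ≤ n then ((Nat.descFactorial n (2*r) : ℝ) / (n:ℝ)^(2*r)) * (c ^ r / (Nat.factorial r : ℝ)) else 0

lemma hF_tendsto (c : ℝ) (r : ℕ) :
    Tendsto (fun n : ℕ => hF c n r) atTop (𝓝 (c ^ r / (Nat.factorial r : ℝ))) := by
  have h1 : Tendsto (fun n : ℕ => ((Nat.descFactorial n (2*r) : ℝ) / (n:ℝ)^(2*r)))
      atTop (𝓝 1) := by
    have heq : ∀ᶠ n : ℕ in atTop, ((Nat.descFactorial n (2*r) : ℝ) / (n:ℝ)^(2*r))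
        = ∏ i ∈ Finset.range (2*r), (1 - (i:ℝ)/(n:ℝ)) := by
      filter_upwards [eventually_ge_atTop (2*r), eventually_ge_atTop 1] with n hn hn1
      have hn0 : (n:ℝ) ≠ 0 := by positivity
      rw [Nat.descFactorial_eq_prod_range, Nat.cast_prod,
        show ((n:ℝ))^(2*r) = ∏ _i ∈ Finset.range (2*r), (n:ℝ) by
          rw [Finset.prod_const, Finset.card_range],
        ← Finset.prod_div_distrib]
      refine Finset.prod_congr rfl fun i hi => ?_
      have hi' : i ≤ n := le_trans (le_of_lt (Finset.mem_range.mp hi)) hn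
      rw [Nat.cast_sub hi']
      field_simp
    have hlim : Tendsto (fun n : ℕ => ∏ i ∈ Finset.range (2*r), (1 - (i:ℝ)/(n:ℝ)))
        atTop (𝓝 (∏ _i ∈ Finset.range (2*r), (1:ℝ))) := by
      refine tendsto_finset_prod _ fun i _ => ?_
      have : Tendsto (fun n : ℕ => (i:ℝ)/(n:ℝ)) atTop (𝓝 0) :=
        tendsto_const_div_atTop_nhds_zero_nat _
      simpa using tendsto_const_nhds.sub this
    rw [Finset.prod_const_one] at hlim
    exact hlim.congr' (heq.mono fun n h => h.symm)
  have : Tendsto (fun n : ℕ => ((Nat.descFactorial n (2*r) : ℝ) / (n:ℝ)^(2*r))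
      * (c ^ r / (Nat.factorial r : ℝ))) atTop (𝓝 (1 * (c ^ r / (Nat.factorial r : ℝ)))) :=
    h1.mul tendsto_const_nhds
  rw [one_mul] at this
  refine this.congr' ?_
  filter_upwards [eventually_ge_atTop (2*r)] with n hn
  rw [hF, if_pos hn]

lemma hermite2_eq_tsum (x y : ℝ) (hx : x ≠ 0) (n : ℕ) (hn : 1 ≤ n) :
    hermite2 n x (y / (n:ℝ)^2) / x ^ n = ∑' r, hF (y / x^2) n r := by
  have hn0 : (n:ℝ) ≠ 0 := by positivity
  rw [tsum_eq_sum (s := Finset.range (n/2+1)) (by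
    intro r hr
    have : ¬ (2 * r ≤ n) := by
      simp only [Finset.mem_range, not_lt] at hr
      omega
    rw [hF, if_neg this])]
  rw [hermite2, Finset.mul_sum, Finset.sum_div]
  refine Finset.sum_congr rfl fun r hr => ?_
  have h2r : 2 * r ≤ n := by
    have := Finset.mem_range.mp hr
    omega
  rw [hF, if_pos h2r]
  have hfac : ((Nat.factorial n : ℕ) : ℝ)
      = ((Nat.factorial (n - 2*r) : ℕ) : ℝ) * ((Nat.descFactorial n (2*r) : ℕ) : ℝ) := by
    rw [← Nat.cast_mul, Nat.factorial_mul_descFactorial h2r]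
  have hxp : x ^ n = x ^ (n - 2*r) * (x^2) ^ r := by
    rw [← pow_mul, ← pow_add]; congr 1; omega
  have hnp : ((n:ℝ))^(2*r) = ((n:ℝ)^2) ^ r := by rw [← pow_mul]
  rw [hfac, hxp, hnp, div_pow, div_pow]
  have h1 : x ^ (n - 2*r) ≠ 0 := pow_ne_zero _ hx
  have h2 : (x^2) ^ r ≠ 0 := pow_ne_zero _ (pow_ne_zero _ hx)
  have h3 : ((n:ℝ)^2) ^ r ≠ 0 := pow_ne_zero _ (pow_ne_zero _ hn0)
  have h4 : ((Nat.factorial (n - 2*r) : ℕ) : ℝ) ≠ 0 := Nat.cast_ne_zero.mpr (Nat.factorial_ne_zero _)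
  have h5 : ((Nat.factorial r : ℕ) : ℝ) ≠ 0 := Nat.cast_ne_zero.mpr (Nat.factorial_ne_zero _)
  field_simp

theorem hermite2_asymptotic (x y : ℝ) (hx : x ≠ 0) :
    Tendsto (fun n : ℕ => hermite2 n x (y / (n : ℝ) ^ 2) / x ^ n)
      atTop (nhds (Real.exp (y / x ^ 2))) := by
  set c := y / x ^ 2 with hc
  have hsum : Summable (fun r : ℕ => |c| ^ r / (Nat.factorial r : ℝ)) :=
    Real.summable_pow_div_factorial |c|
  have hbound : ∀ᶠ n : ℕ in atTop, ∀ r : ℕ, ‖hF c n r‖ ≤ |c| ^ r / (Nat.factorial r : ℝ) := by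
    filter_upwards [eventually_ge_atTop 1] with n hn r
    rw [hF]
    split_ifs with h
    · have hn0 : (0:ℝ) < (n:ℝ)^(2*r) := by positivity
      rw [Real.norm_eq_abs, abs_mul, abs_div, abs_div, abs_pow, abs_pow]
      rw [Nat.abs_cast, Nat.abs_cast, Nat.abs_cast]
      have hd : ((Nat.descFactorial n (2*r) : ℕ) : ℝ) / (n:ℝ)^(2*r) ≤ 1 := by
        rw [div_le_one hn0]
        calc ((Nat.descFactorial n (2*r) : ℕ) : ℝ) ≤ ((n ^ (2*r) : ℕ) : ℝ) := by
              exact_mod_cast Nat.descFactorial_le_pow n (2*r)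
          _ = (n:ℝ)^(2*r) := by push_cast; ring
      calc ((Nat.descFactorial n (2*r) : ℕ) : ℝ) / (n:ℝ)^(2*r) * (|c| ^ r / (Nat.factorial r : ℝ))
          ≤ 1 * (|c| ^ r / (Nat.factorial r : ℝ)) := by
            apply mul_le_mul_of_nonneg_right hd; positivity
        _ = |c| ^ r / (Nat.factorial r : ℝ) := one_mul _
    · simp only [norm_zero]; positivity
  have key := tendsto_tsum_of_dominated_convergence hsum (fun r => hF_tendsto c r) hbound
  have hexp : Real.exp c = ∑' r : ℕ, c ^ r / (Nat.factorial r : ℝ) := by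
    rw [Real.exp_eq_exp_ℝ, NormedSpace.exp_eq_tsum_div]
  rw [hexp]
  refine key.congr' ?_
  filter_upwards [eventually_ge_atTop 1] with n hn
  exact (hermite2_eq_tsum x y hx n hn).symm
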